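/- (Robustness of the mean policy.) Assume ρe ≡ ρo, let π* be a value-maximizing policy, and assume the ambiguity set Π₀(π*) is finite and nonempty. Write d^π(s,a,x) = ρo(x) d^π(s,a|x), and define the mean policy π̄(a|s,x) = (Σ_{π∈Π₀(π*)} d^π(s,a,x)) / (Σ_{π∈Π₀(π*)} Σ_{a'} d^π(s,a',x)) at every (s,x) where the denominator is positive (arbitrary elsewhere). Let α* = |Π*_M ∩ Π₀(π*)| / |Π₀(π*)|, where Π*_M is the set of value-maximizing policies. Then v(π̄) ≥ α* · v* + (1 − α*) · min_{π ∈ Π₀(π*)} v(π), where v* = max_π v(π). -/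

import Mathlib

open scoped BigOperators

/-- `p` is a probability mass function on a finite type. -/
def IsProb {Z : Type*} [Fintype Z] (p : Z → ℝ) : Prop :=
  (∀ z, 0 ≤ p z) ∧ ∑ z, p z = 1

section CMDP

variable {S X A : Type*} [Fintype S] [Fintype X] [Fintype A]

/-- A Markovian stationary policy: a distribution over actions for each state–context pair. -/
def IsPolicy (π : S → X → A → ℝ) : Prop :=
  ∀ s x, IsProb (π s x)

/-- The deterministic policy induced by an action map `f`. -/
def detPolicy [DecidableEq A] (f : S → X → A) : S → X → A → ℝ :=
  fun s x a => if a = f s x then 1 else 0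

/-- A policy is deterministic if it is induced by an action map. -/
def IsDet [DecidableEq A] (π : S → X → A → ℝ) : Prop :=
  ∃ f : S → X → A, π = detPolicy f

/-- The `t`-step state distribution of the Markov chain induced by policy `π` in context `x`,
starting from `s₀ ∼ ν(·|x)`. -/
noncomputable def stateDist (P : S → A → X → S → ℝ) (ν : X → S → ℝ)
    (π : S → X → A → ℝ) (x : X) : ℕ → S → ℝ
  | 0 => fun s => ν x s
  | (t+1) => fun s' => ∑ s, ∑ a, stateDist P ν π x t s * π s x a * P s a x s'

/-- The per-context (discounted) stationary distribution
`d^π(s,a|x) = (1−γ) Σ_t γ^t P^π(s_t = s, a_t = a | x)`. -/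
noncomputable def dCtx (γ : ℝ) (P : S → A → X → S → ℝ) (ν : X → S → ℝ)
    (π : S → X → A → ℝ) (x : X) (s : S) (a : A) : ℝ :=
  (1 - γ) * ∑' t : ℕ, γ ^ t * (stateDist P ν π x t s * π s x a)

/-- Marginalized stationary distribution `d_ρ^π(s,a) = E_{x∼ρ}[d^π(s,a|x)]`. -/
noncomputable def dMarg (γ : ℝ) (P : S → A → X → S → ℝ) (ν : X → S → ℝ)
    (ρ : X → ℝ) (π : S → X → A → ℝ) (s : S) (a : A) : ℝ :=
  ∑ x, ρ x * dCtx γ P ν π x s a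

/-- The `ρ`-marginalized value `v_ρ(π) = Σ_{x,s,a} ρ(x) d^π(s,a|x) r(s,a,x)`. -/
noncomputable def val (γ : ℝ) (P : S → A → X → S → ℝ) (ν : X → S → ℝ)
    (ρ : X → ℝ) (r : S → A → X → ℝ) (π : S → X → A → ℝ) : ℝ :=
  ∑ x, ∑ s, ∑ a, ρ x * dCtx γ P ν π x s a * r s a x

/-- The ambiguity set `Π₀(π)`: deterministic policies whose `ρo`-marginalized stationary
distribution matches the `ρe`-marginalized stationary distribution of `π`. -/
def AmbSet [DecidableEq A] (γ : ℝ) (P : S → A → X → S → ℝ) (ν : X → S → ℝ)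
    (ρo ρe : X → ℝ) (π : S → X → A → ℝ) : Set (S → X → A → ℝ) :=
  {π' | IsDet π' ∧ ∀ s a, dMarg γ P ν ρo π' s a = dMarg γ P ν ρe π s a}

end CMDP

section AuxCMDP
variable {S X A : Type*} [Fintype S] [Fintype X] [Fintype A]

variable (γ : ℝ) (P : S → A → X → S → ℝ) (ν : X → S → ℝ) (π : S → X → A → ℝ) (x : X)

lemma detPolicy_isPolicy [DecidableEq A] (f : S → X → A) : IsPolicy (detPolicy f) := by
  intro s x
  constructor
  · intro a; unfold detPolicy; split <;> norm_num
  · simp [detPolicy]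

lemma stateDist_nonneg (hP : ∀ s a x, IsProb (P s a x)) (hν : ∀ x, IsProb (ν x))
    (hπ : IsPolicy π) : ∀ t s, 0 ≤ stateDist P ν π x t s := by
  intro t
  induction t with
  | zero => intro s; exact (hν x).1 s
  | succ t ih =>
      intro s'
      apply Finset.sum_nonneg; intro s _
      apply Finset.sum_nonneg; intro a _
      exact mul_nonneg (mul_nonneg (ih s) ((hπ s x).1 a)) ((hP s a x).1 s')

lemma stateDist_sum (hP : ∀ s a x, IsProb (P s a x)) (hν : ∀ x, IsProb (ν x))
    (hπ : IsPolicy π) : ∀ t, ∑ s, stateDist P ν π x t s = 1 := by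
  intro t
  induction t with
  | zero => exact (hν x).2
  | succ t ih =>
      show ∑ s', ∑ s, ∑ a, stateDist P ν π x t s * π s x a * P s a x s' = 1
      rw [Finset.sum_comm]
      have : ∀ s ∈ Finset.univ, ∑ s' : S, ∑ a, stateDist P ν π x t s * π s x a * P s a x s'
          = stateDist P ν π x t s := by
        intro s _
        rw [Finset.sum_comm]
        have : ∀ a ∈ Finset.univ, ∑ s' : S, stateDist P ν π x t s * π s x a * P s a x s'
            = stateDist P ν π x t s * π s x a := by
          intro a _
          rw [← Finset.mul_sum, (hP s a x).2, mul_one]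
        rw [Finset.sum_congr rfl this, ← Finset.mul_sum, (hπ s x).2, mul_one]
      rw [Finset.sum_congr rfl this, ih]

noncomputable def mfun (s : S) : ℝ := (1 - γ) * ∑' t : ℕ, γ ^ t * stateDist P ν π x t s

variable {γ P ν π x}

lemma summable_sd (hγ : 0 < γ ∧ γ < 1) (hP : ∀ s a x, IsProb (P s a x))
    (hν : ∀ x, IsProb (ν x)) (hπ : IsPolicy π) (s : S) :
    Summable (fun t : ℕ => γ ^ t * stateDist P ν π x t s) := by
  apply Summable.of_nonneg_of_le
    (fun t => mul_nonneg (pow_nonneg hγ.1.le t) (stateDist_nonneg P ν π x hP hν hπ t s))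
    (fun t => ?_) (summable_geometric_of_lt_one hγ.1.le hγ.2)
  have h1 : stateDist P ν π x t s ≤ 1 := by
    have := stateDist_sum P ν π x hP hν hπ t
    calc stateDist P ν π x t s ≤ ∑ s', stateDist P ν π x t s' :=
          Finset.single_le_sum (fun s' _ => stateDist_nonneg P ν π x hP hν hπ t s') (Finset.mem_univ s)
      _ = 1 := this
  calc γ ^ t * stateDist P ν π x t s ≤ γ ^ t * 1 :=
        mul_le_mul_of_nonneg_left h1 (pow_nonneg hγ.1.le t)
    _ = γ ^ t := mul_one _

lemma dCtx_eq (s : S) (a : A) :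
    dCtx γ P ν π x s a = π s x a * mfun γ P ν π x s := by
  unfold dCtx mfun
  rw [tsum_congr (fun t => by ring :
    ∀ t : ℕ, γ ^ t * (stateDist P ν π x t s * π s x a)
      = (γ ^ t * stateDist P ν π x t s) * π s x a), tsum_mul_right]
  ring

lemma mfun_nonneg (hγ : 0 < γ ∧ γ < 1) (hP : ∀ s a x, IsProb (P s a x))
    (hν : ∀ x, IsProb (ν x)) (hπ : IsPolicy π) (s : S) : 0 ≤ mfun γ P ν π x s := by
  unfold mfun
  apply mul_nonneg (by linarith [hγ.2])
  exact tsum_nonneg fun t =>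
    mul_nonneg (pow_nonneg hγ.1.le t) (stateDist_nonneg P ν π x hP hν hπ t s)

lemma mfun_flow (hγ : 0 < γ ∧ γ < 1) (hP : ∀ s a x, IsProb (P s a x))
    (hν : ∀ x, IsProb (ν x)) (hπ : IsPolicy π) (s' : S) :
    mfun γ P ν π x s' = (1 - γ) * ν x s'
      + γ * ∑ s, ∑ a, mfun γ P ν π x s * π s x a * P s a x s' := by
  have hsum : ∀ s, Summable (fun t : ℕ => γ ^ t * stateDist P ν π x t s) :=
    summable_sd hγ hP hν hπ
  have step : ∀ t : ℕ, γ ^ (t+1) * stateDist P ν π x (t+1) s'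
      = ∑ s, ∑ a, γ * ((γ ^ t * stateDist P ν π x t s) * (π s x a * P s a x s')) := by
    intro t
    show γ ^ (t+1) * (∑ s, ∑ a, stateDist P ν π x t s * π s x a * P s a x s') = _
    rw [Finset.mul_sum]
    refine Finset.sum_congr rfl fun s _ => ?_
    rw [Finset.mul_sum]
    exact Finset.sum_congr rfl fun a _ => by ring
  have tail : ∑' t : ℕ, γ ^ (t+1) * stateDist P ν π x (t+1) s'
      = γ * ∑ s, ∑ a, (∑' t : ℕ, γ ^ t * stateDist P ν π x t s) * π s x a * P s a x s' := by
    rw [tsum_congr step]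
    rw [Summable.tsum_finsetSum (fun s _ => summable_sum fun a _ =>
      (((hsum s).mul_right (π s x a * P s a x s')).mul_left γ))]
    rw [Finset.mul_sum]
    refine Finset.sum_congr rfl fun s _ => ?_
    rw [Summable.tsum_finsetSum (fun a _ => ((hsum s).mul_right (π s x a * P s a x s')).mul_left γ)]
    rw [Finset.mul_sum]
    refine Finset.sum_congr rfl fun a _ => ?_
    rw [tsum_mul_left, tsum_mul_right]
    ring
  have key : (∑' t : ℕ, γ ^ t * stateDist P ν π x t s')
      = ν x s' + γ * ∑ s, ∑ a, (∑' t : ℕ, γ ^ t * stateDist P ν π x t s) * π s x a * P s a x s' := by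
    rw [Summable.tsum_eq_zero_add (hsum s')]
    simp only [pow_zero, one_mul]
    rw [← tail]
    simp [stateDist]
  unfold mfun
  rw [key, mul_add]
  congr 1
  simp only [Finset.mul_sum]
  exact Finset.sum_congr rfl fun s _ => Finset.sum_congr rfl fun a _ => by ring

lemma flow_unique (hγ : 0 < γ ∧ γ < 1) (hP : ∀ s a x, IsProb (P s a x))
    (hπ : IsPolicy π) (c : S → ℝ) (u w : S → ℝ)
    (hu : ∀ s', u s' = c s' + γ * ∑ s, ∑ a, u s * π s x a * P s a x s')
    (hw : ∀ s', w s' = c s' + γ * ∑ s, ∑ a, w s * π s x a * P s a x s') :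
    u = w := by
  set z : S → ℝ := fun s => u s - w s with hz
  have hzeq : ∀ s', z s' = γ * ∑ s, ∑ a, z s * π s x a * P s a x s' := by
    intro s'
    simp only [hz, hu s', hw s', add_sub_add_left_eq_sub, ← Finset.sum_sub_distrib, ← mul_sub]
    congr 1
    exact Finset.sum_congr rfl fun s _ => Finset.sum_congr rfl fun a _ => by ring
  have h1 : ∀ s', |z s'| ≤ γ * ∑ s, ∑ a, |z s| * π s x a * P s a x s' := by
    intro s'
    rw [hzeq s', abs_mul, abs_of_nonneg hγ.1.le]
    refine mul_le_mul_of_nonneg_left ?_ hγ.1.le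
    calc |∑ s, ∑ a, z s * π s x a * P s a x s'|
        ≤ ∑ s, |∑ a, z s * π s x a * P s a x s'| := Finset.abs_sum_le_sum_abs _ _
      _ ≤ ∑ s, ∑ a, |z s| * π s x a * P s a x s' := by
          refine Finset.sum_le_sum fun s _ => ?_
          calc |∑ a, z s * π s x a * P s a x s'|
              ≤ ∑ a, |z s * π s x a * P s a x s'| := Finset.abs_sum_le_sum_abs _ _
            _ = ∑ a, |z s| * π s x a * P s a x s' := by
                refine Finset.sum_congr rfl fun a _ => ?_
                rw [abs_mul, abs_mul, abs_of_nonneg ((hπ s x).1 a),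
                  abs_of_nonneg ((hP s a x).1 s')]
  have hbound : ∑ s', |z s'| ≤ γ * ∑ s, |z s| := by
    calc ∑ s', |z s'| ≤ ∑ s' : S, γ * ∑ s, ∑ a, |z s| * π s x a * P s a x s' :=
          Finset.sum_le_sum fun s' _ => h1 s'
      _ = γ * ∑ s, |z s| := by
          rw [← Finset.mul_sum]
          congr 1
          rw [Finset.sum_comm]
          refine Finset.sum_congr rfl fun s _ => ?_
          rw [Finset.sum_comm]
          have h2 : ∀ a ∈ Finset.univ, ∑ s' : S, |z s| * π s x a * P s a x s'
              = |z s| * π s x a := by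
            intro a _
            rw [← Finset.mul_sum, (hP s a x).2, mul_one]
          rw [Finset.sum_congr rfl h2, ← Finset.mul_sum, (hπ s x).2, mul_one]
  have hpos : 0 ≤ ∑ s, |z s| := Finset.sum_nonneg fun s _ => abs_nonneg (z s)
  have hsum0 : ∑ s, |z s| = 0 := by nlinarith [hγ.2]
  funext s
  have h3 := (Finset.sum_eq_zero_iff_of_nonneg (fun s _ => abs_nonneg (z s))).mp hsum0 s
    (Finset.mem_univ s)
  have h4 : z s = 0 := abs_eq_zero.mp h3
  simp only [hz] at h4
  linarith


end AuxCMDP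

/-- **Robustness of the mean policy.** Assume `ρe ≡ ρo`, let `π*` be
value-maximizing, and assume `Π₀(π*)` is finite and nonempty. The mean policy `π̄`,
defined by the normalized average of occupancies `d^π(s,a,x) = ρo(x) d^π(s,a|x)` over
`Π₀(π*)` wherever the denominator is positive, satisfies
`v(π̄) ≥ α* v* + (1−α*) min_{π∈Π₀(π*)} v(π)` with
`α* = |Π*_M ∩ Π₀(π*)| / |Π₀(π*)|`. -/
theorem mean_policy_robust
    {S X A : Type*} [Fintype S] [Fintype X] [Fintype A] [DecidableEq A]
    [Nonempty S] [Nonempty X] [Nonempty A]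
    (γ : ℝ) (hγ : 0 < γ ∧ γ < 1)
    (P : S → A → X → S → ℝ) (hP : ∀ s a x, IsProb (P s a x))
    (ν : X → S → ℝ) (hν : ∀ x, IsProb (ν x))
    (ρo ρe : X → ℝ) (hρo : IsProb ρo) (hρe : ρe = ρo)
    (r : S → A → X → ℝ) (hr : ∀ s a x, r s a x ∈ Set.Icc (0:ℝ) 1)
    (πstar : S → X → A → ℝ) (hπstar : IsPolicy πstar)
    (hopt : ∀ π' : S → X → A → ℝ, IsPolicy π' →
      val γ P ν ρo r π' ≤ val γ P ν ρo r πstar)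
    (hfin : (AmbSet γ P ν ρo ρe πstar).Finite)
    (hne : (AmbSet γ P ν ρo ρe πstar).Nonempty)
    (πbar : S → X → A → ℝ) (hπbar : IsPolicy πbar)
    (hmean : ∀ s x a,
      0 < ∑ π' ∈ hfin.toFinset, ∑ a', ρo x * dCtx γ P ν π' x s a' →
      πbar s x a =
        (∑ π' ∈ hfin.toFinset, ρo x * dCtx γ P ν π' x s a) /
        (∑ π' ∈ hfin.toFinset, ∑ a', ρo x * dCtx γ P ν π' x s a')) :
    val γ P ν ρo r πbar ≥
      (((({π' | IsPolicy π' ∧ ∀ π'' : S → X → A → ℝ, IsPolicy π'' →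
            val γ P ν ρo r π'' ≤ val γ P ν ρo r π'} ∩
          AmbSet γ P ν ρo ρe πstar).ncard : ℝ) /
          ((AmbSet γ P ν ρo ρe πstar).ncard : ℝ)) * val γ P ν ρo r πstar) +
      (1 - ((({π' | IsPolicy π' ∧ ∀ π'' : S → X → A → ℝ, IsPolicy π'' →
            val γ P ν ρo r π'' ≤ val γ P ν ρo r π'} ∩
          AmbSet γ P ν ρo ρe πstar).ncard : ℝ) /
          ((AmbSet γ P ν ρo ρe πstar).ncard : ℝ))) *
        sInf (val γ P ν ρo r '' AmbSet γ P ν ρo ρe πstar) := by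

  classical
  obtain ⟨hγ0, hγ1⟩ := hγ
  have hγp : 0 < γ ∧ γ < 1 := ⟨hγ0, hγ1⟩
  subst hρe
  set T := hfin.toFinset with hT
  have hmemT : ∀ π' : S → X → A → ℝ, π' ∈ T ↔ π' ∈ AmbSet γ P ν ρe ρe πstar :=
    fun π' => hfin.mem_toFinset
  have hTpol : ∀ π' ∈ T, IsPolicy π' := by
    intro π' h
    obtain ⟨⟨f, rfl⟩, -⟩ := (hmemT π').1 h
    exact detPolicy_isPolicy f
  have hTne : T.Nonempty := by
    obtain ⟨π₀, hπ₀⟩ := hne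
    exact ⟨π₀, (hmemT π₀).2 hπ₀⟩
  have hN : 0 < T.card := Finset.card_pos.mpr hTne
  have hNpos : (0:ℝ) < (T.card : ℝ) := by exact_mod_cast hN
  -- Key per-context identity: N · d^{π̄}(·,·|x) = Σ_{π'∈T} d^{π'}(·,·|x) whenever ρe x > 0
  have key : ∀ x : X, 0 < ρe x → ∀ s a,
      (T.card : ℝ) * dCtx γ P ν πbar x s a = ∑ π' ∈ T, dCtx γ P ν π' x s a := by
    intro x hx
    set u : S → ℝ := fun s => ∑ π' ∈ T, mfun γ P ν π' x s with hu
    have stepA : ∀ s a, (∑ π' ∈ T, dCtx γ P ν π' x s a) = πbar s x a * u s := by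
      intro s a
      have hus : 0 ≤ u s := Finset.sum_nonneg fun π' hm => mfun_nonneg hγp hP hν (hTpol π' hm) s
      rcases eq_or_lt_of_le hus with h0 | h0
      · have hz : ∀ π' ∈ T, mfun γ P ν π' x s = 0 :=
          (Finset.sum_eq_zero_iff_of_nonneg
            (fun π' hm => mfun_nonneg hγp hP hν (hTpol π' hm) s)).mp h0.symm
        rw [← h0, mul_zero]
        exact Finset.sum_eq_zero fun π' hm => by rw [dCtx_eq, hz π' hm, mul_zero]
      · have hdenom : ∑ π' ∈ T, ∑ a', ρe x * dCtx γ P ν π' x s a' = ρe x * u s := by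
          simp only [hu]
          rw [Finset.mul_sum]
          refine Finset.sum_congr rfl fun π' hm => ?_
          have h1 : ∀ a' ∈ Finset.univ,
              ρe x * dCtx γ P ν π' x s a' = ρe x * mfun γ P ν π' x s * π' s x a' := by
            intro a' _
            rw [dCtx_eq]
            ring
          rw [Finset.sum_congr rfl h1, ← Finset.mul_sum, (hTpol π' hm s x).2, mul_one]
        have hposd : 0 < ∑ π' ∈ T, ∑ a', ρe x * dCtx γ P ν π' x s a' := by
          rw [hdenom]; exact mul_pos hx h0
        have hm := hmean s x a hposd
        rw [hdenom, ← Finset.mul_sum, mul_div_mul_left _ _ hx.ne'] at hm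
        rw [hm, div_mul_cancel₀ _ h0.ne']
    have huflow : ∀ s', u s' = (T.card : ℝ) * ((1-γ) * ν x s')
        + γ * ∑ s, ∑ a, u s * πbar s x a * P s a x s' := by
      intro s'
      have h1 : u s' = ∑ π' ∈ T, ((1-γ) * ν x s'
          + γ * ∑ s, ∑ a, mfun γ P ν π' x s * π' s x a * P s a x s') := by
        simp only [hu]
        exact Finset.sum_congr rfl fun π' hm => mfun_flow hγp hP hν (hTpol π' hm) s'
      rw [h1, Finset.sum_add_distrib, Finset.sum_const, nsmul_eq_mul]
      congr 1
      rw [← Finset.mul_sum]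
      congr 1
      rw [Finset.sum_comm]
      refine Finset.sum_congr rfl fun s _ => ?_
      rw [Finset.sum_comm]
      refine Finset.sum_congr rfl fun a _ => ?_
      have h2 : ∑ π' ∈ T, mfun γ P ν π' x s * π' s x a * P s a x s'
          = (∑ π' ∈ T, dCtx γ P ν π' x s a) * P s a x s' := by
        rw [Finset.sum_mul]
        refine Finset.sum_congr rfl fun π' _ => ?_
        rw [dCtx_eq]
        ring
      rw [h2, stepA s a]
      ring
    have hbarflow : ∀ s', (fun s => (T.card : ℝ) * mfun γ P ν πbar x s) s'
        = (T.card : ℝ) * ((1-γ) * ν x s')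
          + γ * ∑ s, ∑ a, (fun s => (T.card : ℝ) * mfun γ P ν πbar x s) s
              * πbar s x a * P s a x s' := by
      intro s'
      simp only
      rw [mfun_flow hγp hP hν hπbar s', mul_add]
      congr 1
      simp only [Finset.mul_sum]
      exact Finset.sum_congr rfl fun s _ => Finset.sum_congr rfl fun a _ => by ring
    have huniq : u = fun s => (T.card : ℝ) * mfun γ P ν πbar x s :=
      flow_unique hγp hP hπbar (fun s' => (T.card : ℝ) * ((1-γ) * ν x s')) u _ huflow hbarflow
    intro s a
    calc (T.card : ℝ) * dCtx γ P ν πbar x s a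
        = πbar s x a * ((T.card : ℝ) * mfun γ P ν πbar x s) := by rw [dCtx_eq]; ring
      _ = πbar s x a * u s := by rw [← congrFun huniq s]
      _ = ∑ π' ∈ T, dCtx γ P ν π' x s a := (stepA s a).symm
  -- Value identity: N · v(π̄) = Σ_{π'∈T} v(π')
  have hval : (T.card : ℝ) * val γ P ν ρe r πbar = ∑ π' ∈ T, val γ P ν ρe r π' := by
    unfold val
    rw [Finset.mul_sum, Finset.sum_comm]
    refine Finset.sum_congr rfl fun x _ => ?_
    rcases eq_or_lt_of_le (hρo.1 x) with h0 | h0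
    · rw [← h0]
      simp
    · calc (T.card : ℝ) * ∑ s, ∑ a, ρe x * dCtx γ P ν πbar x s a * r s a x
          = ∑ s, ∑ a, ρe x * ((T.card : ℝ) * dCtx γ P ν πbar x s a) * r s a x := by
            simp only [Finset.mul_sum]
            exact Finset.sum_congr rfl fun s _ => Finset.sum_congr rfl fun a _ => by ring
        _ = ∑ s, ∑ a, ρe x * (∑ π' ∈ T, dCtx γ P ν π' x s a) * r s a x := by
            refine Finset.sum_congr rfl fun s _ => Finset.sum_congr rfl fun a _ => ?_
            rw [key x h0 s a]
        _ = ∑ s, ∑ a, ∑ π' ∈ T, ρe x * dCtx γ P ν π' x s a * r s a x := by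
            refine Finset.sum_congr rfl fun s _ => Finset.sum_congr rfl fun a _ => ?_
            rw [Finset.mul_sum, Finset.sum_mul]
        _ = ∑ s, ∑ π' ∈ T, ∑ a, ρe x * dCtx γ P ν π' x s a * r s a x :=
            Finset.sum_congr rfl fun s _ => Finset.sum_comm
        _ = ∑ π' ∈ T, ∑ s, ∑ a, ρe x * dCtx γ P ν π' x s a * r s a x := Finset.sum_comm
  -- The optimal part of T
  set p : (S → X → A → ℝ) → Prop := fun π' => ∀ π'' : S → X → A → ℝ, IsPolicy π'' →
    val γ P ν ρe r π'' ≤ val γ P ν ρe r π' with hp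
  set Topt := T.filter p with hToptdef
  have hKcard : ({π' : S → X → A → ℝ | IsPolicy π' ∧ ∀ π'' : S → X → A → ℝ, IsPolicy π'' →
      val γ P ν ρe r π'' ≤ val γ P ν ρe r π'} ∩ AmbSet γ P ν ρe ρe πstar).ncard
      = Topt.card := by
    have hseteq : ({π' : S → X → A → ℝ | IsPolicy π' ∧ ∀ π'' : S → X → A → ℝ, IsPolicy π'' →
        val γ P ν ρe r π'' ≤ val γ P ν ρe r π'} ∩ AmbSet γ P ν ρe ρe πstar)
        = (↑Topt : Set (S → X → A → ℝ)) := by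
      ext π'
      constructor
      · rintro ⟨⟨hpol, hoptp⟩, hamb⟩
        simp only [hToptdef, Finset.coe_filter, Set.mem_setOf_eq]
        exact ⟨(hmemT π').2 hamb, hoptp⟩
      · intro h
        simp only [hToptdef, Finset.coe_filter, Set.mem_setOf_eq] at h
        exact ⟨⟨hTpol π' h.1, h.2⟩, (hmemT π').1 h.1⟩
    rw [hseteq, Set.ncard_coe_finset]
  have hNcard : (AmbSet γ P ν ρe ρe πstar).ncard = T.card := by
    rw [← hfin.coe_toFinset, Set.ncard_coe_finset]
  -- value bounds
  have hbdd : BddBelow (val γ P ν ρe r '' AmbSet γ P ν ρe ρe πstar) :=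
    (hfin.image _).bddBelow
  have hvmin_le : ∀ π' ∈ T, sInf (val γ P ν ρe r '' AmbSet γ P ν ρe ρe πstar)
      ≤ val γ P ν ρe r π' :=
    fun π' hm => csInf_le hbdd ⟨π', (hmemT π').1 hm, rfl⟩
  have hsplit : (Topt.card : ℝ) * val γ P ν ρe r πstar
      + ((T.card : ℝ) - Topt.card) * sInf (val γ P ν ρe r '' AmbSet γ P ν ρe ρe πstar)
      ≤ ∑ π' ∈ T, val γ P ν ρe r π' := by
    rw [← Finset.sum_filter_add_sum_filter_not T p]
    have h1 : ∑ π' ∈ T.filter p, val γ P ν ρe r π' = (Topt.card : ℝ) * val γ P ν ρe r πstar := by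
      rw [← hToptdef]
      have heq : ∀ π' ∈ Topt, val γ P ν ρe r π' = val γ P ν ρe r πstar := by
        intro π' hm
        obtain ⟨hmT, hoptp⟩ := Finset.mem_filter.mp hm
        exact le_antisymm (hopt π' (hTpol π' hmT)) (hoptp πstar hπstar)
      rw [Finset.sum_congr rfl heq, Finset.sum_const, nsmul_eq_mul]
    have hcards : ((T.filter (fun π' => ¬ p π')).card : ℝ) = (T.card : ℝ) - Topt.card := by
      have := Finset.card_filter_add_card_filter_not (s := T) (p := p)
      push_cast [← this]
      ring
    have h2 : ((T.card : ℝ) - Topt.card)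
        * sInf (val γ P ν ρe r '' AmbSet γ P ν ρe ρe πstar)
        ≤ ∑ π' ∈ T.filter (fun π' => ¬ p π'), val γ P ν ρe r π' := by
      rw [← hcards]
      have := Finset.card_nsmul_le_sum (T.filter (fun π' => ¬ p π'))
        (val γ P ν ρe r) (sInf (val γ P ν ρe r '' AmbSet γ P ν ρe ρe πstar))
        (fun π' hm => hvmin_le π' (Finset.mem_filter.mp hm).1)
      rw [nsmul_eq_mul] at this
      exact this
    rw [h1]
    linarith
  -- conclude
  rw [hKcard, hNcard, ge_iff_le, ← mul_le_mul_iff_right₀ hNpos]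
  calc (T.card : ℝ) * (((Topt.card : ℝ) / (T.card : ℝ)) * val γ P ν ρe r πstar
        + (1 - (Topt.card : ℝ) / (T.card : ℝ))
          * sInf (val γ P ν ρe r '' AmbSet γ P ν ρe ρe πstar))
      = (Topt.card : ℝ) * val γ P ν ρe r πstar
        + ((T.card : ℝ) - Topt.card) * sInf (val γ P ν ρe r '' AmbSet γ P ν ρe ρe πstar) := by
        field_simp
    _ ≤ ∑ π' ∈ T, val γ P ν ρe r π' := hsplit
    _ = (T.card : ℝ) * val γ P ν ρe r πbar := hval.symm
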